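/- The category of finite structures over a one-function-symbol signature has no finite dense subcategory: in the category of finite sets equipped with an endofunction (with morphisms the equivariant maps), the cyclic structures Z_n = ({0,...,n−1}, successor mod n) form an infinite family of pairwise non-isomorphic objects such that for m ≠ n there is no morphism from Z_m to Z_n unless n divides m; in particular, for n prime and m < n, Z_n admits no morphism from any structure of size less than n, hence no morphism from any object of a fixed finite set of objects of bounded size for n large enough, so no finite full subcategory is dense. -/

import Mathlib

open CategoryTheory Limits

/-- A finite structure for a signature with a single unary function symbol: a finite set
equipped with an endofunction. -/
structure FinEndo where
  carrier : Type
  [fin : Fintype carrier]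
  f : carrier → carrier

attribute [instance] FinEndo.fin

/-- Morphisms of `FinEndo` are equivariant maps `h` with `h ∘ f = g ∘ h`. -/
instance : Category FinEndo where
  Hom X Y := {h : X.carrier → Y.carrier // h ∘ X.f = Y.f ∘ h}
  id X := ⟨id, rfl⟩
  comp {X Y Z} u v := ⟨v.1 ∘ u.1, by
    funext x
    simp only [Function.comp_apply]
    rw [show u.1 (X.f x) = Y.f (u.1 x) from congrFun u.2 x,
      show v.1 (Y.f (u.1 x)) = Z.f (v.1 (u.1 x)) from congrFun v.2 (u.1 x)]⟩
  id_comp u := rfl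
  comp_id u := rfl
  assoc u v w := rfl

/-- The canonical cocone on the diagram of all morphisms from objects of the subcategory
(along `ι`) into `X`, with apex `X`. -/
@[simps]
def canonicalCocone {C : Type*} [Category C] {G : Type*} [Category G]
    (ι : G ⥤ C) (X : C) : Cocone (CostructuredArrow.proj ι X ⋙ ι) where
  pt := X
  ι := { app := fun g => g.hom
         naturality := fun _ _ f => (CostructuredArrow.w f).trans (Category.comp_id _).symm }

/-- `ι` is dense if every object is the colimit of the canonical diagram of morphisms from
objects of the subcategory into it. -/
def IsDense {C : Type*} [Category C] {G : Type*} [Category G] (ι : G ⥤ C) : Prop :=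
  ∀ X : C, Nonempty (IsColimit (canonicalCocone ι X))

open Fin.NatCast Fin.CommRing

/-- The category of finite sets with an endofunction has no finite dense full subcategory:
no full subcategory on a finite collection of objects is dense, because for a large prime
`n` the cyclic structure `Z_n` receives no morphism from any nonempty structure of smaller
size. -/
theorem finEndo_no_finite_dense_subcategory (P : FinEndo → Prop)
    (hfin : {X : FinEndo | P X}.Finite) :
    ¬ IsDense (ObjectProperty.ι P) := by
  classical
  intro hd
  set n : ℕ := (hfin.toFinset.sup fun X => Fintype.card X.carrier) + 1 with hn
  haveI : NeZero n := ⟨by omega⟩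
  let Z : FinEndo := { carrier := Fin n, f := fun x => x + 1 }
  have hcard : ∀ X : FinEndo, P X → Fintype.card X.carrier < n := by
    intro X hX
    have : Fintype.card X.carrier ≤ hfin.toFinset.sup fun X => Fintype.card X.carrier :=
      Finset.le_sup (f := fun X => Fintype.card X.carrier) (hfin.mem_toFinset.mpr hX)
    omega
  -- any object of the subcategory mapping into Z must be empty
  have hempty : ∀ (X : FinEndo), P X → (X ⟶ Z) → IsEmpty X.carrier := by
    intro X hX h
    by_contra he
    rw [not_isEmpty_iff] at he
    obtain ⟨x0⟩ := he
    have key : ∀ k : ℕ, h.1 (X.f^[k] x0) = h.1 x0 + (k : Fin n) := by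
      intro k
      induction k with
      | zero => simp
      | succ k ih =>
        rw [Function.iterate_succ_apply']
        have h2 : h.1 (X.f (X.f^[k] x0)) = (h.1 (X.f^[k] x0)) + 1 :=
          congrFun h.2 (X.f^[k] x0)
        rw [h2, ih]
        push_cast
        ring
    have hsurj : Function.Surjective h.1 := by
      intro y
      refine ⟨X.f^[(y - h.1 x0).val] x0, ?_⟩
      rw [key]
      simp
    have hle : Fintype.card (Fin n) ≤ Fintype.card X.carrier :=
      Fintype.card_le_of_surjective h.1 hsurj
    have := hcard X hX
    simp only [Fintype.card_fin] at hle
    omega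
  let E : FinEndo := { carrier := Empty, f := id }
  let c : Cocone (CostructuredArrow.proj (ObjectProperty.ι P) Z ⋙
      ObjectProperty.ι P) :=
    { pt := E
      ι :=
        { app := fun j =>
            ⟨fun x => ((hempty j.left.obj j.left.property j.hom).false x).elim, by
              funext x
              exact ((hempty j.left.obj j.left.property j.hom).false x).elim⟩
          naturality := by
            intro j j' u
            apply Subtype.ext
            funext x
            exact ((hempty j.left.obj j.left.property j.hom).false x).elim } }
  obtain ⟨hc⟩ := hd Z
  exact ((hc.desc c).1 (0 : Fin n)).elim
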